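/- arXiv:2201.01497 — 2 statements merged into one kernel-verified Lean document; each statement's English description precedes it below -/
import Mathlib

section
/- Let C be a 2-quasi-cyclic code with Goursat data (C1, C2, C12, g). Then C is a dihedral code (i.e., C is invariant under the map (a, a') ↦ (ā', ā)) if and only if C̄1 = C2, C̄12 = C12, and ḡ·g = e_{C12}. -/
noncomputable section

/-- The cyclic group of order `n`, written multiplicatively. -/
abbrev Zn (n : ℕ) := Multiplicative (ZMod n)

/-- The group algebra `FH` of the cyclic group of order `n` over `F`. -/
abbrev FH (F : Type*) [Field F] (n : ℕ) := MonoidAlgebra F (Zn n)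

variable {F : Type*} [Field F] [Fintype F] {n : ℕ} [NeZero n]

/-- The "bar" map of the group algebra, induced by `x ↦ x⁻¹`. -/
def bar (a : FH F n) : FH F n := MonoidAlgebra.ofCoeff (Finsupp.equivMapDomain (Equiv.inv (Zn n)) a.coeff)

/-- The inner product on `FH`: `⟨a, b⟩ = ∑ a_g * b_g`. -/
def innerFH (a b : FH F n) : F := ∑ g : Zn n, a.coeff g * b.coeff g

/-- The inner product on `FH × FH`. -/
def innerFH2 (a b : FH F n × FH F n) : F := innerFH a.1 b.1 + innerFH a.2 b.2

/-- `Ĉ₁₂ = {(c, c·g) : c ∈ C12}` as an `FH`-submodule of `FH × FH`. -/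
def hatSub (C12 : Ideal (FH F n)) (g : FH F n) : Submodule (FH F n) (FH F n × FH F n) :=
  Submodule.map (LinearMap.prod LinearMap.id (LinearMap.mulRight (FH F n) g)) C12

/-- A 2-quasi-cyclic code (an `FH`-submodule of `FH × FH`) is self-dual if it
equals its orthogonal complement. -/
def IsSelfDual (C : Submodule (FH F n) (FH F n × FH F n)) : Prop :=
  (C : Set (FH F n × FH F n)) = {v | ∀ c ∈ C, innerFH2 v c = 0}

/-- A 2-quasi-cyclic code is a dihedral code iff it is invariant under
`(a, a') ↦ (ā', ā)` (left multiplication by `y` in the dihedral group algebra). -/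
def IsDihedral (C : Submodule (FH F n) (FH F n × FH F n)) : Prop :=
  ∀ p ∈ C, (bar p.2, bar p.1) ∈ C

/-- A 2-quasi-cyclic code is a consta-dihedral code iff it is invariant under
`(a, a') ↦ (−ā', ā)` (left multiplication by `ỹ` in the consta-dihedral algebra). -/
def IsConstaDihedral (C : Submodule (FH F n) (FH F n × FH F n)) : Prop :=
  ∀ p ∈ C, (-(bar p.2), bar p.1) ∈ C


set_option linter.unusedSectionVars false in
/-- `bar` as an algebra equivalence. -/
def barAlg : FH F n ≃ₐ[F] FH F n := MonoidAlgebra.domCongr F F (MulEquiv.inv (Zn n))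

set_option linter.unusedSectionVars false in
lemma bar_eq (a : FH F n) : bar a = barAlg (F := F) (n := n) a := by
  ext h; simp [bar, barAlg, Finsupp.equivMapDomain_apply]

set_option linter.unusedSectionVars false in
lemma bar_bar (a : FH F n) : bar (bar a) = a := by
  ext h; simp [bar, Finsupp.equivMapDomain_apply]

set_option linter.unusedSectionVars false in
lemma bar_add (a b : FH F n) : bar (a + b) = bar a + bar b := by
  simp [bar_eq, map_add]

set_option linter.unusedSectionVars false in
lemma bar_mul (a b : FH F n) : bar (a * b) = bar a * bar b := by
  simp [bar_eq, map_mul]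

set_option linter.unusedSectionVars false in
lemma bar_zero : bar (0 : FH F n) = 0 := by simp [bar_eq]

set_option linter.unusedSectionVars false in
lemma bar_sub (a b : FH F n) : bar (a - b) = bar a - bar b := by
  simp [bar_eq, map_sub]

/-- A 2-quasi-cyclic code `C` with Goursat data `(C1, C2, C12, g)` is a dihedral
code iff `C̄1 = C2`, `C̄12 = C12`, and `ḡ·g = e_{C12}`. -/
theorem dihedral_iff (F : Type*) [Field F] [Fintype F] (n : ℕ) [NeZero n]
    (hn : 1 < n) (hcop : Nat.Coprime n (Fintype.card F))
    (C : Submodule (FH F n) (FH F n × FH F n))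
    (C1 C2 C12 : Ideal (FH F n)) (e g h : FH F n)
    (h112 : C1 ⊓ C12 = ⊥) (h212 : C2 ⊓ C12 = ⊥)
    (heC : e ∈ C12) (hspan : C12 = Ideal.span {e}) (hid : ∀ c ∈ C12, e * c = c)
    (hg : g ∈ C12) (hh : h ∈ C12) (hgh : g * h = e)
    (hC : C = Submodule.prod C1 C2 ⊔ hatSub C12 g) :
    IsDihedral C ↔
      (bar '' (C1 : Set (FH F n)) = (C2 : Set (FH F n)) ∧
       bar '' (C12 : Set (FH F n)) = (C12 : Set (FH F n)) ∧
       bar g * g = e) := by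
  have memC : ∀ p : FH F n × FH F n, p ∈ C ↔
      ∃ c1 ∈ C1, ∃ c2 ∈ C2, ∃ c ∈ C12, p = (c1 + c, c2 + c * g) := by
    intro p
    rw [hC, Submodule.mem_sup]
    constructor
    · rintro ⟨y, hy, z, hz, rfl⟩
      rw [Submodule.mem_prod] at hy
      simp only [hatSub, Submodule.mem_map] at hz
      obtain ⟨c, hc, rfl⟩ := hz
      exact ⟨y.1, hy.1, y.2, hy.2, c, hc, by simp [Prod.ext_iff]⟩
    · rintro ⟨c1, hc1, c2, hc2, c, hc, rfl⟩
      refine ⟨(c1, c2), Submodule.mem_prod.mpr ⟨hc1, hc2⟩, (c, c * g),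
        ⟨c, hc, by simp⟩, by simp [Prod.ext_iff]⟩
  -- decomposition lemmas
  have mem1 : ∀ a : FH F n, (a, (0 : FH F n)) ∈ C → a ∈ C1 := by
    intro a ha
    obtain ⟨c1, hc1, c2, hc2, c, hc, hp⟩ := (memC _).mp ha
    obtain ⟨h1, h2⟩ := Prod.ext_iff.mp hp
    simp only at h1 h2
    have hcg : c * g ∈ C12 := Ideal.mul_mem_right g _ hc
    have hc2' : c2 ∈ C2 ⊓ C12 := ⟨hc2, by
      have : c2 = -(c * g) := by linear_combination -h2
      rw [this]; exact neg_mem hcg⟩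
    rw [h212, Submodule.mem_bot] at hc2'
    have hcg0 : c * g = 0 := by rw [hc2'] at h2; linear_combination -h2
    have hc0 : c = 0 := by
      have := hid c hc
      calc c = e * c := (hid c hc).symm
        _ = h * (c * g) := by rw [← hgh]; ring
        _ = 0 := by rw [hcg0, mul_zero]
    rw [h1, hc0, add_zero]; exact hc1
  have mem2 : ∀ a : FH F n, ((0 : FH F n), a) ∈ C → a ∈ C2 := by
    intro a ha
    obtain ⟨c1, hc1, c2, hc2, c, hc, hp⟩ := (memC _).mp ha
    obtain ⟨h1, h2⟩ := Prod.ext_iff.mp hp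
    simp only at h1 h2
    have hc1' : c1 ∈ C1 ⊓ C12 := ⟨hc1, by
      have : c1 = -c := by linear_combination -h1
      rw [this]; exact neg_mem hc⟩
    rw [h112, Submodule.mem_bot] at hc1'
    have hc0 : c = 0 := by rw [hc1'] at h1; linear_combination -h1
    rw [h2, hc0, zero_mul, add_zero]; exact hc2
  constructor
  · intro D
    -- step 1
    have hC1sub : ∀ a ∈ C1, bar a ∈ C2 := by
      intro a ha
      have hmem : ((a : FH F n), (0 : FH F n)) ∈ C :=
        (memC _).mpr ⟨a, ha, 0, zero_mem _, 0, zero_mem _, by simp⟩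
      have := D _ hmem
      simp only [bar_zero] at this
      exact mem2 _ this
    have hC2sub : ∀ a ∈ C2, bar a ∈ C1 := by
      intro a ha
      have hmem : ((0 : FH F n), (a : FH F n)) ∈ C :=
        (memC _).mpr ⟨0, zero_mem _, a, ha, 0, zero_mem _, by simp⟩
      have := D _ hmem
      simp only [bar_zero] at this
      exact mem1 _ this
    have step1 : bar '' (C1 : Set (FH F n)) = (C2 : Set (FH F n)) := by
      ext a
      constructor
      · rintro ⟨b, hb, rfl⟩; exact hC1sub b hb
      · intro ha; exact ⟨bar a, hC2sub a ha, bar_bar a⟩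
    -- step 2 : bar e = e
    have hbare : bar e = e := by
      have hhe : ((h : FH F n), (e : FH F n)) ∈ C := (memC _).mpr
        ⟨0, zero_mem _, 0, zero_mem _, h, hh, by
          simp [Prod.ext_iff, mul_comm h g, hgh]⟩
      have hD := D _ hhe
      simp only at hD
      obtain ⟨a1, ha1, a2, ha2, a, ha, hp⟩ := (memC _).mp hD
      obtain ⟨hp1, _⟩ := Prod.ext_iff.mp hp
      simp only at hp1
      -- hp1 : bar e = a1 + a
      have ht1 : bar e - e * bar e ∈ C1 := by
        have : bar e - e * bar e = a1 - e * a1 := by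
          rw [hp1, mul_add, hid a ha]; ring
        rw [this]
        exact sub_mem ha1 (Ideal.mul_mem_left _ e ha1)
      have htC : ((bar e - e * bar e : FH F n), (0 : FH F n)) ∈ C :=
        (memC _).mpr ⟨_, ht1, 0, zero_mem _, 0, zero_mem _, by simp⟩
      have hD2 := D _ htC
      simp only [bar_zero] at hD2
      have hbt2 : bar (bar e - e * bar e) ∈ C2 := mem2 _ hD2
      have hbt : bar (bar e - e * bar e) = e - bar e * e := by
        rw [bar_sub, bar_mul, bar_bar]
      have hbt12 : bar (bar e - e * bar e) ∈ C12 := by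
        rw [hbt]
        exact sub_mem heC (Ideal.mul_mem_left _ _ heC)
      have hbt0 : bar (bar e - e * bar e) = 0 := by
        have : bar (bar e - e * bar e) ∈ C2 ⊓ C12 := ⟨hbt2, hbt12⟩
        rwa [h212, Submodule.mem_bot] at this
      have ht0 : bar e - e * bar e = 0 := by
        have := congrArg bar hbt0
        rwa [bar_bar, bar_zero] at this
      have h1 : e = bar e * e := by
        rw [hbt] at hbt0; linear_combination hbt0
      have h2 : bar e = e * bar e := by linear_combination ht0
      rw [h2, mul_comm, ← h1]
    -- step 3
    have hC12sub : ∀ c ∈ C12, bar c ∈ C12 := by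
      intro c hc
      have : bar c = e * bar c := by
        conv_lhs => rw [← hid c hc]
        rw [bar_mul, hbare]
      rw [this]
      exact Ideal.mul_mem_right _ _ heC
    have step2 : bar '' (C12 : Set (FH F n)) = (C12 : Set (FH F n)) := by
      ext a
      constructor
      · rintro ⟨b, hb, rfl⟩; exact hC12sub b hb
      · intro ha; exact ⟨bar a, hC12sub a ha, bar_bar a⟩
    -- step 4
    have step3 : bar g * g = e := by
      have heg : ((e : FH F n), (g : FH F n)) ∈ C := (memC _).mpr
        ⟨0, zero_mem _, 0, zero_mem _, e, heC, by
          simp [Prod.ext_iff, hid g hg]⟩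
      have hD := D _ heg
      simp only [hbare] at hD
      obtain ⟨c1, hc1, c2, hc2, c', hc', hp⟩ := (memC _).mp hD
      obtain ⟨hp1, hp2⟩ := Prod.ext_iff.mp hp
      simp only at hp1 hp2
      -- hp1 : bar g = c1 + c', hp2 : e = c2 + c' * g
      have hc20 : c2 = 0 := by
        have : c2 ∈ C2 ⊓ C12 := ⟨hc2, by
          have : c2 = e - c' * g := by linear_combination -hp2
          rw [this]
          exact sub_mem heC (Ideal.mul_mem_right _ _ hc')⟩
        rwa [h212, Submodule.mem_bot] at this
      have hc10 : c1 = 0 := by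
        have : c1 ∈ C1 ⊓ C12 := ⟨hc1, by
          have : c1 = bar g - c' := by linear_combination -hp1
          rw [this]
          exact sub_mem (hC12sub g hg) hc'⟩
        rwa [h112, Submodule.mem_bot] at this
      have : bar g = c' := by rw [hp1, hc10, zero_add]
      rw [this]
      rw [hc20, zero_add] at hp2
      exact hp2.symm
    exact ⟨step1, step2, step3⟩
  · rintro ⟨h1, h2, h3⟩ p hp
    obtain ⟨c1, hc1, c2, hc2, c, hc, rfl⟩ := (memC _).mp hp
    have hbarc : bar c ∈ C12 := by
      have : bar c ∈ (C12 : Set (FH F n)) := by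
        rw [← h2]; exact ⟨c, hc, rfl⟩
      exact this
    have hbc2 : bar c2 ∈ C1 := by
      have : (c2 : FH F n) ∈ bar '' (C1 : Set (FH F n)) := by rw [h1]; exact hc2
      obtain ⟨b, hb, hbe⟩ := this
      rw [← hbe, bar_bar]; exact hb
    have hbc1 : bar c1 ∈ C2 := by
      have : bar c1 ∈ (C2 : Set (FH F n)) := by
        rw [← h1]; exact ⟨c1, hc1, rfl⟩
      exact this
    have hc'g : (bar c * bar g) * g = bar c := by
      rw [mul_assoc, h3, mul_comm (bar c) e]
      exact hid _ hbarc
    refine (memC _).mpr ⟨bar c2, hbc2, bar c1, hbc1, bar c * bar g,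
      Ideal.mul_mem_right _ _ hbarc, ?_⟩
    simp only [Prod.ext_iff]
    constructor
    · show bar (c2 + c * g) = bar c2 + bar c * bar g
      rw [bar_add, bar_mul]
    · show bar (c1 + c) = bar c1 + (bar c * bar g) * g
      rw [bar_add, hc'g]
end
end

section
/- Suppose char F = 2. Then every principal self-dual 2-quasi-cyclic code of length 2n over F is a dihedral code. In particular, every self-dual 2-quasi-cyclic code of the form FH·(1, a) with a ∈ FH (i.e., every self-dual double circulant code) is a dihedral code. -/
noncomputable section

set_option linter.unusedSectionVars false

variable {F : Type*} [Field F] [Fintype F] {n : ℕ} [NeZero n]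

lemma bar_apply (a : FH F n) (g : Zn n) : (bar a).coeff g = a.coeff g⁻¹ := by
  simp [bar, MonoidAlgebra.coeff_ofCoeff, Finsupp.equivMapDomain_apply]

lemma mul_apply_one' (b c : FH F n) :
    (b * c).coeff (1 : Zn n) = ∑ h : Zn n, b.coeff h * c.coeff h⁻¹ := by
  rw [MonoidAlgebra.coeff_mul_apply_left, Finsupp.sum_fintype]
  · simp
  · intro h; simp

lemma key' (b c : FH F n) : innerFH (bar b) c = (b * c).coeff (1 : Zn n) := by
  rw [mul_apply_one', innerFH]
  exact Fintype.sum_equiv (Equiv.inv (Zn n)) _ _ (fun g => by simp [bar_apply])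

/-- (char F = 2.) Every principal self-dual 2-quasi-cyclic code is a dihedral code;
in particular every self-dual double circulant code `FH·(1, a)` is dihedral. -/
theorem principal_self_dual_is_dihedral_char_two (F : Type*) [Field F] [Fintype F]
    (n : ℕ) [NeZero n]
    (hn : 1 < n) (hcop : Nat.Coprime n (Fintype.card F))
    (hchar : ringChar F = 2) :
    (∀ C : Submodule (FH F n) (FH F n × FH F n), IsSelfDual C →
      (∃ v : FH F n × FH F n, C = Submodule.span (FH F n) {v}) → IsDihedral C) ∧
    (∀ (a : FH F n) (C : Submodule (FH F n) (FH F n × FH F n)), IsSelfDual C →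
      C = Submodule.span (FH F n) {((1 : FH F n), a)} → IsDihedral C) := by
  have h2 : ∀ x : F, x + x = 0 := by
    intro x
    have hc : (2 : F) = 0 := by
      haveI : CharP F 2 := hchar ▸ ringChar.charP F
      exact CharP.cast_eq_zero F 2
    rw [← two_mul, hc, zero_mul]
  have part1 : ∀ C : Submodule (FH F n) (FH F n × FH F n), IsSelfDual C →
      (∃ v : FH F n × FH F n, C = Submodule.span (FH F n) {v}) → IsDihedral C := by
    rintro C hsd ⟨w, hw⟩ p hp
    rw [hw, Submodule.mem_span_singleton] at hp
    obtain ⟨r, hr⟩ := hp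
    have hmem : ∀ c ∈ C, innerFH2 ((bar p.2 : FH F n), (bar p.1 : FH F n)) c = 0 := by
      intro c hc
      rw [hw, Submodule.mem_span_singleton] at hc
      obtain ⟨s, hs⟩ := hc
      have hp1 : p.1 = r * w.1 := by rw [← hr]; rfl
      have hp2 : p.2 = r * w.2 := by rw [← hr]; rfl
      have hc1 : c.1 = s * w.1 := by rw [← hs]; rfl
      have hc2 : c.2 = s * w.2 := by rw [← hs]; rfl
      show innerFH (bar p.2) c.1 + innerFH (bar p.1) c.2 = 0
      rw [hp1, hp2, hc1, hc2, key', key']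
      have heq : (r * w.2) * (s * w.1) = (r * w.1) * (s * w.2) := by ring
      rw [heq]
      exact h2 _
    show ((bar p.2 : FH F n), (bar p.1 : FH F n)) ∈ C
    rw [← SetLike.mem_coe, hsd]
    exact hmem
  exact ⟨part1, fun a C hsd hC => part1 C hsd ⟨_, hC⟩⟩
end
end
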